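/- For bit strings z,x ∈ {0,1}^l and m,m' ∈ {0,1}^l, Σ_{z,x ∈ {0,1}^l} Z^z X^x |m⟩⟨m'| (Z^z X^x)† equals 0 if m ≠ m', and equals 2^l · I if m = m'. -/

import Mathlib

open Matrix

/-- The multi-qubit Pauli operator `Z^z X^x` on `l` qubits, acting on basis states by
`Z^z X^x |m⟩ = (-1)^{z·(m ⊕ x)} |m ⊕ x⟩`. -/
noncomputable def pauliZX (l : ℕ) (z x : Fin l → Bool) :
    Matrix (Fin l → Bool) (Fin l → Bool) ℂ :=
  Matrix.of fun m' m =>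
    if m' = fun i => xor (m i) (x i) then
      (-1 : ℂ) ^ (Finset.univ.filter fun i => z i && m' i).card
    else 0

lemma sign_eq_prod (l : ℕ) (z a : Fin l → Bool) :
    (-1 : ℂ) ^ (Finset.univ.filter fun i => z i && a i).card
      = ∏ i, (if z i && a i then (-1 : ℂ) else 1) := by
  rw [Finset.prod_ite, Finset.prod_const, Finset.prod_const_one, mul_one]

lemma sum_z_signs (l : ℕ) (a b : Fin l → Bool) :
    (∑ z : Fin l → Bool,
      ((-1 : ℂ) ^ (Finset.univ.filter fun i => z i && a i).card)
      * ((-1 : ℂ) ^ (Finset.univ.filter fun i => z i && b i).card))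
    = if a = b then (2 : ℂ) ^ l else 0 := by
  have key : (∑ z : Fin l → Bool,
      ∏ i, ((if z i && a i then (-1 : ℂ) else 1) * (if z i && b i then (-1 : ℂ) else 1)))
      = ∏ i, ∑ t : Bool, ((if t && a i then (-1 : ℂ) else 1) * (if t && b i then (-1 : ℂ) else 1)) := by
    rw [Finset.prod_univ_sum (fun _ => (Finset.univ : Finset Bool))]
    rw [← Fintype.piFinset_univ]
  calc (∑ z : Fin l → Bool,
      ((-1 : ℂ) ^ (Finset.univ.filter fun i => z i && a i).card)
      * ((-1 : ℂ) ^ (Finset.univ.filter fun i => z i && b i).card))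
      = ∑ z : Fin l → Bool,
        ∏ i, ((if z i && a i then (-1 : ℂ) else 1) * (if z i && b i then (-1 : ℂ) else 1)) := by
        simp_rw [sign_eq_prod, Finset.prod_mul_distrib]
    _ = ∏ i, ∑ t : Bool, ((if t && a i then (-1 : ℂ) else 1) * (if t && b i then (-1 : ℂ) else 1)) := key
    _ = ∏ i, (if a i = b i then (2 : ℂ) else 0) := by
        refine Finset.prod_congr rfl fun i _ => ?_
        cases ha : a i <;> cases hb : b i <;> simp [Fintype.sum_bool] <;> norm_num
    _ = if a = b then (2 : ℂ) ^ l else 0 := by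
        by_cases h : a = b
        · subst h; simp
        · rw [if_neg h]
          obtain ⟨i, hi⟩ := Function.ne_iff.mp h
          exact Finset.prod_eq_zero (Finset.mem_univ i) (if_neg hi)

/-- Key computation of the Pauli mixing lemma:
`Σ_{z,x} Z^z X^x |m⟩⟨m'| (Z^z X^x)†` is `0` if `m ≠ m'` and `2^l · I` if `m = m'`. -/
theorem pauli_twirl_stdBasis (l : ℕ) (m m' : Fin l → Bool) :
    ∑ z : Fin l → Bool, ∑ x : Fin l → Bool,
      pauliZX l z x * Matrix.single m m' (1 : ℂ) * (pauliZX l z x)ᴴ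
    = if m = m' then
        ((2 : ℂ) ^ l) • (1 : Matrix (Fin l → Bool) (Fin l → Bool) ℂ)
      else 0 := by
  ext a b
  have entry : ∀ z x : Fin l → Bool,
      (pauliZX l z x * Matrix.single m m' (1 : ℂ) * (pauliZX l z x)ᴴ) a b
      = (if a = fun i => xor (m i) (x i) then
          (-1 : ℂ) ^ (Finset.univ.filter fun i => z i && a i).card else 0)
        * (if b = fun i => xor (m' i) (x i) then
          (-1 : ℂ) ^ (Finset.univ.filter fun i => z i && b i).card else 0) := by
    intro z x
    have hE : ∀ c d, Matrix.single m m' (1:ℂ) c d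
        = if c = m then (if d = m' then (1:ℂ) else 0) else 0 := by
      intro c d
      simp [Matrix.single, ite_and, eq_comm]
    simp only [Matrix.mul_apply, Matrix.conjTranspose_apply, hE, mul_ite, ite_mul,
      mul_zero, zero_mul, mul_one, Finset.sum_ite_eq', Finset.sum_ite_eq,
      Finset.mem_univ, if_true, apply_ite (starRingEnd ℂ), map_pow, map_neg, _root_.map_one,
      map_zero, pauliZX, Matrix.of_apply]
    split_ifs <;> simp [map_pow]
  simp only [Matrix.sum_apply, entry]
  have hcond : ∀ x : Fin l → Bool,
      (a = fun i => xor (m i) (x i)) ↔ (x = fun i => xor (m i) (a i)) := by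
    intro x
    constructor <;> (rintro rfl; funext i; simp [← Bool.xor_assoc])
  simp only [hcond, ite_mul, zero_mul, Finset.sum_ite_eq', Finset.mem_univ, if_true]
  by_cases hb : b = fun i => xor (m' i) (xor (m i) (a i))
  · simp only [if_pos hb]
    rw [sum_z_signs l a b]
    by_cases hm : m = m'
    · subst hm
      have hba : b = a := by rw [hb]; funext i; simp [← Bool.xor_assoc]
      subst hba
      simp [Matrix.smul_apply, Matrix.one_apply]
    · have hab : ¬ a = b := by
        intro h
        apply hm
        funext i
        have h2 := congrFun hb i
        rw [← h] at h2
        revert h2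
        cases m i <;> cases m' i <;> cases a i <;> simp
      simp [hab, hm]
  · simp only [if_neg hb, mul_zero, Finset.sum_const_zero]
    by_cases hm : m = m'
    · subst hm
      have hab : ¬ a = b := by
        intro h
        apply hb
        funext i
        simp [← h, ← Bool.xor_assoc]
      simp [Matrix.smul_apply, Matrix.one_apply, Ne.symm, hab]
    · simp [hm]
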